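/- For every integer n ≥ 1, the 2-adic valuation of ∑_{j=1}^{n} 1/(2j-1) equals 2·ν_2(n). -/

import Mathlib

open Finset

private def xx (k : ℕ) : ℤ := 2 * k + 1
private def AA (n : ℕ) : ℤ := ∑ k ∈ range n, ∏ i ∈ (range n).erase k, xx i
private def BB (n : ℕ) : ℤ := ∏ i ∈ range n, xx i
private def CC (n : ℕ) : ℤ := ∑ k ∈ range n, ∏ i ∈ ((range n).erase k).erase (n-1-k), xx i

private lemma xx_pos (k : ℕ) : 0 < xx k := by unfold xx; positivity

private lemma BB_pos (n : ℕ) : 0 < BB n := Finset.prod_pos (fun i _ => xx_pos i)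

private lemma AA_pos {n : ℕ} (hn : 1 ≤ n) : 0 < AA n := by
  apply Finset.sum_pos (fun k _ => Finset.prod_pos (fun i _ => xx_pos i))
  exact nonempty_range_iff.mpr (by omega)

private lemma xx_mod2 (i : ℕ) : ((xx i : ℤ) : ZMod 2) = 1 := by
  unfold xx; push_cast
  rw [show (2 : ZMod 2) = 0 by decide, zero_mul, zero_add]

private lemma BB_odd (n : ℕ) : ¬ (2:ℤ) ∣ BB n := by
  have h2 : ((2:ℕ):ℤ) ∣ BB n ↔ _ := (ZMod.intCast_zmod_eq_zero_iff_dvd (BB n) 2).symm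
  push_cast at h2
  rw [h2]
  have : ((BB n : ℤ) : ZMod 2) = 1 := by
    unfold BB; push_cast
    rw [Finset.prod_congr rfl (fun i _ => xx_mod2 i), Finset.prod_const_one]
  simp [this]

private lemma AA_odd {n : ℕ} (hn : ¬ 2 ∣ n) : ¬ (2:ℤ) ∣ AA n := by
  have h2 : ((2:ℕ):ℤ) ∣ AA n ↔ _ := (ZMod.intCast_zmod_eq_zero_iff_dvd (AA n) 2).symm
  push_cast at h2
  rw [h2]
  have heq : ((AA n : ℤ) : ZMod 2) = (n : ZMod 2) := by
    unfold AA; push_cast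
    have h1 : ∀ k ∈ range n, (∏ i ∈ (range n).erase k, ((xx i : ℤ) : ZMod 2)) = 1 := by
      intro k _
      rw [Finset.prod_congr rfl (fun i _ => xx_mod2 i), Finset.prod_const_one]
    rw [Finset.sum_congr rfl h1]
    simp
  rw [heq, ZMod.natCast_eq_zero_iff]
  exact hn

private lemma sum_eq (n : ℕ) (hn : 1 ≤ n) :
    (∑ j ∈ Finset.Icc 1 n, (1 : ℚ) / (2 * j - 1)) = (AA n : ℚ) / (BB n : ℚ) := by
  have hB : (BB n : ℚ) ≠ 0 := by exact_mod_cast (BB_pos n).ne'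
  rw [eq_div_iff hB]
  have h1 : Finset.Icc 1 n = Finset.map ⟨fun k => k + 1, add_left_injective 1⟩ (range n) := by
    ext j
    simp only [Finset.mem_map, Finset.mem_Icc, Finset.mem_range, Function.Embedding.coeFn_mk]
    constructor
    · rintro ⟨h1, h2⟩; exact ⟨j - 1, by omega, by omega⟩
    · rintro ⟨a, ha, rfl⟩; omega
  rw [h1, Finset.sum_map]
  simp only [Function.Embedding.coeFn_mk]
  unfold AA BB
  push_cast
  rw [Finset.sum_mul]
  apply Finset.sum_congr rfl
  intro k hk
  have hc : (2 * ((k:ℚ)+1) - 1) = ((xx k : ℤ) : ℚ) := by unfold xx; push_cast; ring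
  have hxk : ((xx k : ℤ) : ℚ) ≠ 0 := by
    rw [← hc]
    have : (0:ℚ) ≤ (k:ℚ) := Nat.cast_nonneg k
    intro h; linarith
  have hsplit := (Finset.mul_prod_erase (range n) (fun i => ((xx i : ℤ) : ℚ)) hk).symm
  rw [hsplit, hc, ← mul_assoc, one_div_mul_cancel hxk, one_mul]

private lemma AA_eq_mul {n : ℕ} (hn : 2 ∣ n) (h1 : 1 ≤ n) : AA n = (n : ℤ) * CC n := by
  have key : 2 * AA n = 2 * ((n : ℤ) * CC n) := by
    have hre : AA n = ∑ k ∈ range n, ∏ i ∈ (range n).erase (n-1-k), xx i := by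
      unfold AA
      apply Finset.sum_nbij' (fun k => n-1-k) (fun k => n-1-k)
      · intro a ha; simp only [Finset.mem_range] at *; omega
      · intro a ha; simp only [Finset.mem_range] at *; omega
      · intro a ha; simp only [Finset.mem_range] at *; omega
      · intro a ha; simp only [Finset.mem_range] at *; omega
      · intro a ha
        simp only [Finset.mem_range] at ha
        have h : n - 1 - (n - 1 - a) = a := by omega
        rw [h]
    rw [two_mul]
    nth_rewrite 2 [hre]
    unfold AA CC
    rw [← Finset.sum_add_distrib, Finset.mul_sum, Finset.mul_sum]
    apply Finset.sum_congr rfl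
    intro k hk
    simp only [Finset.mem_range] at hk
    have hσe : n-1-k ∈ (range n).erase k := by
      simp only [Finset.mem_erase, Finset.mem_range]; omega
    have hke : k ∈ (range n).erase (n-1-k) := by
      simp only [Finset.mem_erase, Finset.mem_range]; omega
    rw [← Finset.mul_prod_erase _ _ hσe, ← Finset.mul_prod_erase _ _ hke,
        Finset.erase_right_comm]
    have hxs : xx (n-1-k) + xx k = 2 * n := by
      unfold xx
      have h : ((n-1-k : ℕ) : ℤ) = (n:ℤ) - 1 - k := by omega
      rw [h]; ring
    rw [← add_mul, hxs]
    ring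
  exact mul_left_cancel₀ two_ne_zero key

private lemma cop (a j : ℕ) : Nat.Coprime (2*j+1) (2^(a+1)) :=
  Nat.Coprime.pow_right _ (((Nat.prime_two.coprime_iff_not_dvd).mpr (by omega)).symm)

private def uu (a j : ℕ) : (ZMod (2^(a+1)))ˣ := ZMod.unitOfCoprime (2*j+1) (cop a j)

private lemma uu_val (a j : ℕ) :
    ((uu a j : (ZMod (2^(a+1)))ˣ) : ZMod (2^(a+1))) = ((2*j+1 : ℕ) : ZMod (2^(a+1))) :=
  ZMod.coe_unitOfCoprime _ _

private lemma xx_cast (a j : ℕ) :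
    ((xx j : ℤ) : ZMod (2^(a+1))) = ((uu a j : (ZMod (2^(a+1)))ˣ) : ZMod (2^(a+1))) := by
  rw [uu_val]; unfold xx; push_cast; ring

private lemma uu_periodic (a j : ℕ) : uu a (j + 2^a) = uu a j := by
  apply Units.ext
  rw [uu_val, uu_val]
  have h : 2*(j + 2^a)+1 = (2*j+1) + 2^(a+1) := by ring
  rw [h, Nat.cast_add, ZMod.natCast_self, add_zero]

private lemma sq_sum_int (P : ℕ) :
    3 * ∑ k ∈ range P, (2*(k:ℤ)+1)^2 = 4*(P:ℤ)^3 - P := by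
  induction P with
  | zero => simp
  | succ P ih =>
    rw [Finset.sum_range_succ, mul_add, ih]
    push_cast
    ring

private lemma three_dvd (a : ℕ) : (3:ℤ) ∣ ((2^a:ℤ)^2 - 1) := by
  induction a with
  | zero => simp
  | succ a ih =>
    obtain ⟨c, hc⟩ := ih
    exact ⟨4*c+1, by ring_nf; ring_nf at hc; linarith⟩

private lemma sq_sum_mod (a : ℕ) :
    ((2:ℤ)^(a+1)) ∣ (∑ k ∈ range (2^a), (2*(k:ℤ)+1)^2) - 2^a := by
  obtain ⟨c, hc⟩ := three_dvd a
  have h3 := sq_sum_int (2^a)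
  refine ⟨2 * c, ?_⟩
  have h9 : (3:ℤ) * ((∑ k ∈ range (2^a), (2*(k:ℤ)+1)^2) - 2^a) = 3 * (2^(a+1) * (2 * c)) := by
    push_cast at h3 ⊢
    linear_combination h3 + 4*(2:ℤ)^a * hc
  linarith

private lemma uu_injOn (a : ℕ) : Set.InjOn (uu a) (range (2^a)) := by
  intro k hk k' hk' h
  simp only [Finset.coe_range, Set.mem_Iio] at hk hk'
  have hv : ((2*k+1 : ℕ) : ZMod (2^(a+1))) = ((2*k'+1 : ℕ) : ZMod (2^(a+1))) := by
    rw [← uu_val, ← uu_val, h]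
  rw [ZMod.natCast_eq_natCast_iff'] at hv
  have h1 : 2*k+1 < 2^(a+1) := by rw [pow_succ]; omega
  have h2 : 2*k'+1 < 2^(a+1) := by rw [pow_succ]; omega
  rw [Nat.mod_eq_of_lt h1, Nat.mod_eq_of_lt h2] at hv
  omega

private lemma image_uu (a : ℕ) :
    haveI : NeZero (2^(a+1)) := ⟨by positivity⟩
    (range (2^a)).image (uu a) = Finset.univ := by
  haveI : NeZero (2^(a+1)) := ⟨by positivity⟩
  apply Finset.eq_univ_of_card
  rw [Finset.card_image_of_injOn (uu_injOn a), Finset.card_range,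
      ZMod.card_units_eq_totient, Nat.totient_prime_pow Nat.prime_two (Nat.succ_pos a)]
  simp

private lemma sum_units (a : ℕ) (F : (ZMod (2^(a+1)))ˣ → ZMod (2^(a+1))) :
    haveI : NeZero (2^(a+1)) := ⟨by positivity⟩
    ∑ k ∈ range (2^a), F (uu a k) = ∑ x : (ZMod (2^(a+1)))ˣ, F x := by
  haveI : NeZero (2^(a+1)) := ⟨by positivity⟩
  rw [← image_uu a, Finset.sum_image
    (fun x hx y hy h => uu_injOn a (by simpa using hx) (by simpa using hy) h)]

private lemma sq_sum_zmod (a : ℕ) :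
    ∑ k ∈ range (2^a), ((uu a k : (ZMod (2^(a+1)))ˣ) : ZMod (2^(a+1)))^2
      = ((2^a : ℕ) : ZMod (2^(a+1))) := by
  have h1 : ∀ k, ((uu a k : (ZMod (2^(a+1)))ˣ) : ZMod (2^(a+1)))^2
      = (((2*(k:ℤ)+1)^2 : ℤ) : ZMod (2^(a+1))) := by
    intro k
    rw [← xx_cast]
    unfold xx
    push_cast
    ring
  rw [Finset.sum_congr rfl (fun k _ => h1 k), ← Int.cast_sum]
  have h2 := sq_sum_mod a
  have h3 : ((((∑ k ∈ range (2^a), (2*(k:ℤ)+1)^2) - 2^a) : ℤ) : ZMod (2^(a+1))) = 0 := by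
    rw [ZMod.intCast_zmod_eq_zero_iff_dvd]
    exact_mod_cast h2
  push_cast at h3 ⊢
  linear_combination h3

private lemma inv_sq_sum_zmod (a : ℕ) :
    ∑ k ∈ range (2^a), ((((uu a k)⁻¹ : (ZMod (2^(a+1)))ˣ)) : ZMod (2^(a+1)))^2
      = ((2^a : ℕ) : ZMod (2^(a+1))) := by
  haveI : NeZero (2^(a+1)) := ⟨by positivity⟩
  rw [sum_units a (fun x => ((x⁻¹ : (ZMod (2^(a+1)))ˣ) : ZMod (2^(a+1)))^2)]
  rw [show ∑ x : (ZMod (2^(a+1)))ˣ, ((x⁻¹ : (ZMod (2^(a+1)))ˣ) : ZMod (2^(a+1)))^2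
      = ∑ x : (ZMod (2^(a+1)))ˣ, ((x : (ZMod (2^(a+1)))ˣ) : ZMod (2^(a+1)))^2 from
    Equiv.sum_comp (Equiv.inv _) (fun x => ((x : (ZMod (2^(a+1)))ˣ) : ZMod (2^(a+1)))^2)]
  rw [← sum_units a (fun x => ((x : (ZMod (2^(a+1)))ˣ) : ZMod (2^(a+1)))^2)]
  exact sq_sum_zmod a

private lemma periodic_sum {M : Type*} [AddCommMonoid M] (g : ℕ → M) (P m : ℕ)
    (hg : ∀ k, g (k + P) = g k) :
    ∑ k ∈ range (m * P), g k = m • ∑ k ∈ range P, g k := by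
  have hshift : ∀ c k, g (c * P + k) = g k := by
    intro c
    induction c with
    | zero => simp
    | succ c ih2 =>
      intro k
      have h : (c+1) * P + k = (c * P + k) + P := by ring
      rw [h, hg, ih2]
  induction m with
  | zero => simp
  | succ m ih =>
    rw [succ_nsmul, add_mul, one_mul, Finset.sum_range_add, ih]
    congr 1
    exact Finset.sum_congr rfl (fun k _ => hshift m k)

private lemma odd_mul_pow (a w : ℕ) (hw : ¬ 2 ∣ w) :
    ((w * 2^a : ℕ) : ZMod (2^(a+1))) = ((2^a : ℕ) : ZMod (2^(a+1))) := by
  obtain ⟨r, hr⟩ : ∃ r, w = 2*r+1 := ⟨w/2, by omega⟩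
  have h : w * 2^a = 2^a + r * 2^(a+1) := by rw [hr]; ring
  rw [h, Nat.cast_add, Nat.cast_mul, ZMod.natCast_self, mul_zero, add_zero]

private lemma inv_sq_sum_n (a m : ℕ) (hmo : ¬ 2 ∣ m) :
    ∑ k ∈ range (m * 2^a), ((((uu a k)⁻¹ : (ZMod (2^(a+1)))ˣ)) : ZMod (2^(a+1)))^2
      = ((2^a : ℕ) : ZMod (2^(a+1))) := by
  rw [periodic_sum _ _ _ (fun k => by rw [uu_periodic a k]), inv_sq_sum_zmod,
      nsmul_eq_mul, ← Nat.cast_mul, odd_mul_pow a m hmo]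

private lemma uu_neg (a : ℕ) {n k : ℕ} (hk : k < n) (hdvd : 2^(a+1) ∣ 2*n) :
    uu a (n-1-k) = - uu a k := by
  apply Units.ext
  rw [Units.val_neg, uu_val, uu_val]
  have hsum : (2*(n-1-k)+1) + (2*k+1) = 2*n := by omega
  apply eq_neg_of_add_eq_zero_left
  rw [← Nat.cast_add, hsum, ZMod.natCast_eq_zero_iff]
  exact hdvd

private lemma W_odd (n : ℕ) : ¬ 2 ∣ (∏ i ∈ range n, (2*i+1)) := by
  rw [Nat.two_dvd_ne_zero, ← Nat.odd_iff]
  apply Finset.prod_induction _ Odd (fun a b ha hb => ha.mul hb) odd_one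
  intro i _
  exact ⟨i, by ring⟩

private lemma CC_mod {n : ℕ} (h2 : 2 ∣ n) (a m : ℕ) (hm : n = m * 2^a) (hmo : ¬ 2 ∣ m) :
    ((CC n : ℤ) : ZMod (2^(a+1))) = - ((2^a : ℕ) : ZMod (2^(a+1))) := by
  set R := ZMod (2^(a+1)) with hR
  have hdvd : 2^(a+1) ∣ 2*n := ⟨m, by rw [hm]; ring⟩
  have hUdef : ∀ s : Finset ℕ, (∏ i ∈ s, ((xx i : ℤ) : R)) = ((∏ i ∈ s, uu a i : Rˣ) : R) := by
    intro s
    rw [Finset.prod_congr rfl (fun i _ => xx_cast a i)]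
    simpa using (map_prod (Units.coeHom R) (fun i => uu a i) s).symm
  unfold CC
  push_cast
  have hterm : ∀ k ∈ range n,
      (∏ i ∈ ((range n).erase k).erase (n-1-k), ((xx i : ℤ) : R))
        = -(((((uu a k)⁻¹ : Rˣ)) : R)^2 * ((∏ i ∈ range n, uu a i : Rˣ) : R)) := by
    intro k hk
    simp only [Finset.mem_range] at hk
    have hσe : n-1-k ∈ (range n).erase k := by
      simp only [Finset.mem_erase, Finset.mem_range]; omega
    have hke : k ∈ range n := by simp only [Finset.mem_range]; omega
    have hU1 : (∏ i ∈ range n, uu a i) = uu a k * (uu a (n-1-k) *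
        ∏ i ∈ ((range n).erase k).erase (n-1-k), uu a i) := by
      rw [Finset.mul_prod_erase _ _ hσe, Finset.mul_prod_erase _ _ hke]
    have hneg := uu_neg a hk hdvd
    have hprod : (∏ i ∈ ((range n).erase k).erase (n-1-k), uu a i)
        = -(((uu a k)⁻¹)^2 * (∏ i ∈ range n, uu a i)) := by
      rw [hU1, hneg, neg_mul, mul_neg]
      simp [sq, mul_assoc]
    rw [hUdef, hprod]
    simp [sq]
  have hs : (∑ k ∈ range n, ((((uu a k)⁻¹ : Rˣ)) : R)^2) = ((2^a : ℕ) : R) := by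
    rw [hm]
    exact inv_sq_sum_n a m hmo
  have hU : ((∏ i ∈ range n, uu a i : Rˣ) : R) = ((∏ i ∈ range n, (2*i+1) : ℕ) : R) := by
    rw [← hUdef]
    rw [Finset.prod_congr rfl (fun i _ => ?_)]
    · rw [Nat.cast_prod]
    · unfold xx; show (((2*(i:ℤ)+1 : ℤ)) : ZMod (2^(a+1))) = ((2*i+1 : ℕ) : ZMod (2^(a+1))); push_cast; ring
  rw [Finset.sum_congr rfl hterm, Finset.sum_neg_distrib, ← Finset.sum_mul, hs, hU]
  have hfin : (((2^a : ℕ) : R)) * ((∏ i ∈ range n, (2*i+1) : ℕ) : R) = ((2^a : ℕ) : R) := by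
    rw [← Nat.cast_mul, mul_comm, odd_mul_pow a _ (W_odd n)]
  push_cast at hfin ⊢
  linear_combination -hfin

private lemma CC_val {n : ℕ} (h2 : 2 ∣ n) (h1 : 1 ≤ n) :
    CC n ≠ 0 ∧ padicValInt 2 (CC n) = padicValNat 2 n := by
  haveI : Fact (Nat.Prime 2) := ⟨Nat.prime_two⟩
  set a := padicValNat 2 n with ha
  have hfac : n.factorization 2 = a := Nat.factorization_def n Nat.prime_two
  have hm0 : n = (n / 2^a) * 2^a := by
    conv_lhs => rw [← Nat.ordProj_mul_ordCompl_eq_self n 2]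
    rw [hfac]; ring
  have hmo : ¬ 2 ∣ (n / 2^a) := by
    have h := Nat.not_dvd_ordCompl Nat.prime_two (by omega : n ≠ 0)
    rwa [hfac] at h
  have hcm := CC_mod h2 a (n / 2^a) hm0 hmo
  have hdvd : ((2^(a+1) : ℕ) : ℤ) ∣ CC n + (2^a : ℤ) := by
    rw [← ZMod.intCast_zmod_eq_zero_iff_dvd]
    push_cast
    push_cast at hcm
    linear_combination hcm
  obtain ⟨t, ht⟩ := hdvd
  have hCC : CC n = 2^a * (2*t - 1) := by
    push_cast at ht
    linear_combination ht
  have hne : (2*t - 1 : ℤ) ≠ 0 := by omega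
  have hpow : ((2:ℤ)^a) ≠ 0 := by positivity
  constructor
  · rw [hCC]; exact mul_ne_zero hpow hne
  · rw [hCC, padicValInt.mul hpow hne]
    have hv1 : padicValInt 2 ((2:ℤ)^a) = a := by
      have : ((2:ℤ)^a) = ((2^a : ℕ) : ℤ) := by push_cast; ring
      rw [this, padicValInt.of_nat, padicValNat.prime_pow]
    have hv2 : padicValInt 2 (2*t - 1) = 0 := by
      apply padicValInt.eq_zero_of_not_dvd
      have : ¬ (2:ℤ) ∣ 2*t - 1 := by omega
      exact_mod_cast this
    rw [hv1, hv2, add_zero]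

theorem stmt_4 (n : ℕ) (hn : 1 ≤ n) :
    padicValRat 2 (∑ j ∈ Finset.Icc 1 n, (1 : ℚ) / (2 * j - 1)) =
      2 * padicValNat 2 n := by
  haveI : Fact (Nat.Prime 2) := ⟨Nat.prime_two⟩
  rw [sum_eq n hn]
  have hA : (AA n : ℚ) ≠ 0 := by exact_mod_cast (AA_pos hn).ne'
  have hB : (BB n : ℚ) ≠ 0 := by exact_mod_cast (BB_pos n).ne'
  rw [padicValRat.div hA hB, padicValRat.of_int, padicValRat.of_int]
  have hBv : padicValInt 2 (BB n) = 0 := by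
    apply padicValInt.eq_zero_of_not_dvd
    exact_mod_cast BB_odd n
  rw [hBv]
  by_cases hpar : 2 ∣ n
  · obtain ⟨hCne, hCv⟩ := CC_val hpar hn
    have hnz : ((n:ℤ)) ≠ 0 := by exact_mod_cast (by omega : n ≠ 0)
    rw [AA_eq_mul hpar hn, padicValInt.mul hnz hCne, hCv, padicValInt.of_nat]
    push_cast
    ring
  · have hAv : padicValInt 2 (AA n) = 0 := by
      apply padicValInt.eq_zero_of_not_dvd
      exact_mod_cast AA_odd hpar
    have hnv : padicValNat 2 n = 0 := padicValNat.eq_zero_of_not_dvd hpar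
    rw [hAv, hnv]
    simp
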